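/- Given a triad 0 → F₋ → A ⊕ B¹ ⊕ B² → F₊ → 0 (as above), set T⁻¹(S) = (ker(d₋²) → A ⊕ B¹ → coker(c₋, d₋¹)), where the first map is the restriction of (c₋, d₋¹). Then T⁻¹(S) is a diad: the composition of the two maps is zero, the component ker(d₋²) → A is injective, and the component A → coker(c₋, d₋¹) is surjective. -/
import Mathlib


open CategoryTheory CategoryTheory.Limits

/-- Given a triad `0 → F₋ → A ⊕ B¹ ⊕ B² → F₊ → 0`, the associated complex
`T⁻¹(S) = (ker(d₋²) → A ⊕ B¹ → coker(c₋, d₋¹))` is a diad: the two maps compose to zero,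
the component `ker(d₋²) → A` is injective, and the component `A → coker(c₋, d₋¹)` is
surjective. -/
theorem stmt16 {C : Type*} [Category C] [Abelian C] {Fm A B1 B2 Fp : C}
    (cm : Fm ⟶ A) (dm1 : Fm ⟶ B1) (dm2 : Fm ⟶ B2)
    (cp : A ⟶ Fp) (dp1 : B1 ⟶ Fp) (dp2 : B2 ⟶ Fp)
    (w : biprod.lift cm (biprod.lift dm1 dm2) ≫ biprod.desc cp (biprod.desc dp1 dp2) = 0)
    (hS : (ShortComplex.mk _ _ w).ShortExact)
    (hm1 : Mono (biprod.lift cm dm1)) (hm2 : Mono (biprod.lift cm dm2))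
    (he1 : Epi (biprod.desc cp dp1)) (he2 : Epi (biprod.desc cp dp2)) :
    (kernel.ι dm2 ≫ biprod.lift cm dm1) ≫ cokernel.π (biprod.lift cm dm1) = 0 ∧
    Mono (kernel.ι dm2 ≫ cm) ∧
    Epi (biprod.inl ≫ cokernel.π (biprod.lift cm dm1)) := by
  refine ⟨by simp, ?_, ?_⟩
  · -- Mono (kernel.ι dm2 ≫ cm)
    have h : kernel.ι dm2 ≫ biprod.lift cm dm2
        = (kernel.ι dm2 ≫ cm) ≫ (biprod.inl : A ⟶ A ⊞ B2) := by
      apply biprod.hom_ext <;> simp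
    have : Mono ((kernel.ι dm2 ≫ cm) ≫ (biprod.inl : A ⟶ A ⊞ B2)) := by
      rw [← h]; exact mono_comp _ _
    exact mono_of_mono _ (biprod.inl : A ⟶ A ⊞ B2)
  · -- Epi
    haveI hg : Epi (biprod.desc cp (biprod.desc dp1 dp2)) := hS.epi_g
    have hdm1 : Epi dm1 := by
      rw [epi_iff_surjective_up_to_refinements]
      intro T b
      set y : T ⟶ A ⊞ (B1 ⊞ B2) :=
        b ≫ (biprod.inl : B1 ⟶ B1 ⊞ B2) ≫ (biprod.inr : B1 ⊞ B2 ⟶ A ⊞ (B1 ⊞ B2)) with hy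
      obtain ⟨T₁, π₁, hπ₁, u, hu⟩ :=
        surjective_up_to_refinements_of_epi (biprod.desc cp dp2) (-(b ≫ dp1) : T ⟶ Fp)
      set j : A ⊞ B2 ⟶ A ⊞ (B1 ⊞ B2) :=
        biprod.desc biprod.inl ((biprod.inr : B2 ⟶ B1 ⊞ B2) ≫ biprod.inr) with hj
      set z : T₁ ⟶ A ⊞ (B1 ⊞ B2) := π₁ ≫ y + u ≫ j with hz
      have hzg : z ≫ biprod.desc cp (biprod.desc dp1 dp2) = 0 := by
        have h1 : y ≫ biprod.desc cp (biprod.desc dp1 dp2) = b ≫ dp1 := by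
          simp [hy]
        have h2 : j ≫ biprod.desc cp (biprod.desc dp1 dp2) = biprod.desc cp dp2 := by
          apply biprod.hom_ext' <;> simp [hj]
        simp only [hz, Preadditive.add_comp, Category.assoc, h1, h2, ← hu]
        simp
      obtain ⟨T₂, π₂, hπ₂, x, hx⟩ := hS.exact.exact_up_to_refinements z hzg
      refine ⟨T₂, π₂ ≫ π₁, epi_comp _ _, x, ?_⟩
      have hj0 : j ≫ (biprod.snd : A ⊞ (B1 ⊞ B2) ⟶ B1 ⊞ B2) ≫ biprod.fst = 0 := by
        apply biprod.hom_ext' <;> simp [hj]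
      have hp : z ≫ (biprod.snd : A ⊞ (B1 ⊞ B2) ⟶ B1 ⊞ B2) ≫ biprod.fst = π₁ ≫ b := by
        rw [hz, Preadditive.add_comp, Category.assoc u j, hj0, comp_zero, add_zero, hy]
        simp
      have key := hx =≫ ((biprod.snd : A ⊞ (B1 ⊞ B2) ⟶ B1 ⊞ B2) ≫ biprod.fst)
      simp only [Category.assoc] at key
      rw [hp] at key
      simpa using key
    rw [Preadditive.epi_iff_cancel_zero]
    intro W h hW
    rw [Category.assoc] at hW
    have hπh : cokernel.π (biprod.lift cm dm1) ≫ h = 0 := by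
      apply biprod.hom_ext'
      · simpa using hW
      · have hlift : biprod.lift cm dm1
            = cm ≫ biprod.inl + dm1 ≫ (biprod.inr : B1 ⟶ A ⊞ B1) := by
          apply biprod.hom_ext <;> simp
        have h0 : (cm ≫ biprod.inl + dm1 ≫ (biprod.inr : B1 ⟶ A ⊞ B1)) ≫
            cokernel.π (biprod.lift cm dm1) ≫ h = 0 := by
          rw [← hlift, ← Category.assoc, cokernel.condition, zero_comp]
        rw [Preadditive.add_comp, Category.assoc, Category.assoc, hW, comp_zero,
          zero_add] at h0
        rw [← cancel_epi dm1]
        simpa using h0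
    exact (cancel_epi (cokernel.π (biprod.lift cm dm1))).mp (by rw [hπh, comp_zero])
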